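/- Let B be a generalized Bayesian network. Then for any cutset C of B, the Markov chain semantics, the limit average semantics, and the limit semantics induce the same set of full joint distributions: [B]_{MC-C} = [B]_{LimAvg-C} = [B]_{Lim-C}. -/

import Mathlib

open Filter
open scoped Classical

noncomputable section

namespace GBNPaper

variable {V : Type} [Fintype V] [DecidableEq V]

/-- A distribution over a finite type: nonnegative values summing to one. -/
def IsDist {α : Type} [Fintype α] (μ : α → ℝ) : Prop :=
  (∀ a, 0 ≤ μ a) ∧ ∑ a, μ a = 1

/-- The set of parents of a node `X` w.r.t. an edge set `E`. -/
def Pre (E : Finset (V × V)) (X : V) : Finset V :=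
  (E.filter fun e => e.2 = X).image Prod.fst

/-- The set of initial (parentless) nodes. -/
def InitSet (E : Finset (V × V)) : Finset V :=
  Finset.univ.filter fun X => Pre E X = ∅

/-- Assignments over a subset `U` of the nodes. -/
abbrev Asg (U : Finset V) : Type := {x // x ∈ U} → Bool

/-- A full assignment `b` agrees with a partial assignment `d` on `U`. -/
abbrev Agrees (b : V → Bool) (U : Finset V) (d : Asg U) : Prop :=
  ∀ x : {x // x ∈ U}, b x.1 = d x

/-- A generalized Bayesian network over node set `V`. -/
structure GBN (V : Type) [Fintype V] [DecidableEq V] where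
  /-- the directed edges -/
  edges : Finset (V × V)
  /-- CPT entries: the probability of `X = T` given an assignment of the parents of `X` -/
  cpt : (X : V) → Asg (Pre edges X) → ℝ
  cpt_nonneg : ∀ X b, 0 ≤ cpt X b
  cpt_le_one : ∀ X b, cpt X b ≤ 1
  /-- the initial distribution over assignments of the initial nodes -/
  ι : Asg (InitSet edges) → ℝ
  ι_dist : IsDist ι

/-- Probability of an event (set of full assignments) under `μ`. -/
def probIf (μ : (V → Bool) → ℝ) (p : (V → Bool) → Prop) : ℝ :=
  ∑ b : V → Bool, if p b then μ b else 0

/-- The marginal distribution of `μ` on `U`. -/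
def marginal (μ : (V → Bool) → ℝ) (U : Finset V) : Asg U → ℝ :=
  fun d => probIf μ fun b => Agrees b U d

/-- `Pr(X = v | parents as given by b)`. -/
def copyProb (B : GBN V) (X : V) (v : Bool) (b : V → Bool) : ℝ :=
  if v then B.cpt X (fun p => b p.1) else 1 - B.cpt X (fun p => b p.1)

/-- The standard BN semantics (chain rule) of a GBN. -/
def distBN (B : GBN V) (b : V → Bool) : ℝ :=
  B.ι (fun x => b x.1) *
    ∏ X ∈ Finset.univ \ InitSet B.edges, copyProb B X (b X) b

/-- The edge set contains no directed cycle. -/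
def Acyclic (E : Finset (V × V)) : Prop :=
  ∀ x : V, ¬ Relation.TransGen (fun a b => (a, b) ∈ E) x x

/-- `C` is a cutset: every directed cycle contains a node of `C`. -/
def IsCutset (E : Finset (V × V)) (C : Finset V) : Prop :=
  ∀ x : V, ¬ Relation.TransGen (fun a b => (a, b) ∈ E ∧ a ∉ C ∧ b ∉ C) x x

/-- The standard BN semantics of the `C`-dissected GBN `B↑C↑γ`, as a joint
distribution over assignments of the original nodes `V` together with
assignments of the copies `C'` of the cutset nodes. -/
def distDissect (B : GBN V) (C : Finset V) (γ : Asg C → ℝ)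
    (b : V → Bool) (c : Asg C) : ℝ :=
  B.ι (fun x => b x.1) * γ (fun x => b x.1) *
    (∏ X ∈ (Finset.univ \ InitSet B.edges) \ C, copyProb B X (b X) b) *
    ∏ Y ∈ C.attach, copyProb B Y.1 (c Y) b

/-- `Next(B,C,γ)`: restrict `dist_BN(B↑C↑γ)` to `(V∖C) ∪ C'` and re-identify
the copies with the original cutset nodes. -/
def Next (B : GBN V) (C : Finset V) (γ : Asg C → ℝ) (a : V → Bool) : ℝ :=
  ∑ b : V → Bool,
    if ∀ x : V, x ∉ C → b x = a x then distDissect B C γ b (fun y => a y.1) else 0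

/-- `Extend(B,C,γ) = dist_BN(B↑C↑γ)|_V`. -/
def Extend (B : GBN V) (C : Finset V) (γ : Asg C → ℝ) (a : V → Bool) : ℝ :=
  ∑ c : Asg C, distDissect B C γ a c

/-- Dirac (point) distribution. -/
def DiracD {α : Type} [DecidableEq α] (b : α) : α → ℝ := fun c => if c = b then 1 else 0

/-- Transition matrix of the cutset Markov chain `M_{B↑C}`:
`P(b,c) = Next(B,C,Dirac(b))|_C (c)`. -/
def cutsetP (B : GBN V) (C : Finset V) (b c : Asg C) : ℝ :=
  marginal (Next B C (DiracD b)) C c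

/-- Vector-matrix multiplication `γ·P`. -/
def vecMul {α : Type} [Fintype α] (γ : α → ℝ) (P : α → α → ℝ) : α → ℝ :=
  fun c => ∑ b, γ b * P b c

/-- The transient distributions `γ0·P^n`. -/
def matIter {α : Type} [Fintype α] (P : α → α → ℝ) (γ0 : α → ℝ) : ℕ → (α → ℝ)
  | 0 => γ0
  | n + 1 => vecMul (matIter P γ0 n) P

/-- The sequence `γ_{n+1} = Next(B,C,γ_n)|_C`. -/
def nextSeq (B : GBN V) (C : Finset V) (γ0 : Asg C → ℝ) : ℕ → (Asg C → ℝ)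
  | 0 => γ0
  | n + 1 => marginal (Next B C (nextSeq B C γ0 n)) C

/-- Cesàro averages of a sequence of vectors. -/
def cesaro {α : Type} (f : ℕ → α → ℝ) (n : ℕ) : α → ℝ :=
  fun a => (∑ i ∈ Finset.range (n + 1), f i a) / (n + 1)

/-- The Markov chain semantics `[B]_{MC-C}`: image of
`γ0 ↦ Extend(B,C,lrf^{γ0})` over all initial cutset distributions `γ0`,
where `lrf^{γ0}` is the Cesàro limit of the transient distributions. -/
def MCSem (B : GBN V) (C : Finset V) : Set ((V → Bool) → ℝ) :=
  { μ | ∃ γ0 γ, IsDist γ0 ∧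
      Tendsto (cesaro (matIter (cutsetP B C) γ0)) atTop (nhds γ) ∧
      μ = Extend B C γ }

/-- The limit semantics `[B]_{Lim-C}`. -/
def LimSem (B : GBN V) (C : Finset V) : Set ((V → Bool) → ℝ) :=
  { μ | ∃ γ0 γ, IsDist γ0 ∧
      Tendsto (nextSeq B C γ0) atTop (nhds γ) ∧
      μ = Extend B C γ }

/-- The limit average semantics `[B]_{LimAvg-C}`. -/
def LimAvgSem (B : GBN V) (C : Finset V) : Set ((V → Bool) → ℝ) :=
  { μ | ∃ γ0 γ, IsDist γ0 ∧
      Tendsto (cesaro (nextSeq B C γ0)) atTop (nhds γ) ∧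
      μ = Extend B C γ }

/-- The Markov chain semantics in stationary-distribution form:
`{ Extend(B,C,γ) : γ a distribution with γ = γ·P }`. -/
def MCStatSem (B : GBN V) (C : Finset V) : Set ((V → Bool) → ℝ) :=
  { μ | ∃ γ : Asg C → ℝ, IsDist γ ∧ γ = vecMul γ (cutsetP B C) ∧ μ = Extend B C γ }

/-- Strong CPT-consistency of `μ` for node `X`. -/
def StrongCPT (B : GBN V) (μ : (V → Bool) → ℝ) (X : V) : Prop :=
  ∀ c : Asg (Pre B.edges X),
    probIf μ (fun f => f X = true ∧ Agrees f (Pre B.edges X) c) =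
      probIf μ (fun f => Agrees f (Pre B.edges X) c) * B.cpt X c

/-- Weak CPT-consistency of `μ` for node `X`. -/
def WeakCPT (B : GBN V) (μ : (V → Bool) → ℝ) (X : V) : Prop :=
  probIf μ (fun f => f X = true) =
    ∑ c : Asg (Pre B.edges X),
      probIf μ (fun f => Agrees f (Pre B.edges X) c) * B.cpt X c

/-- The CPT semantics `[B]_{Cpt}`. -/
def CptSem (B : GBN V) : Set ((V → Bool) → ℝ) :=
  { μ | IsDist μ ∧ marginal μ (InitSet B.edges) = B.ι ∧
      ∀ X, X ∉ InitSet B.edges → StrongCPT B μ X }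

/-- `(X ⊥ Y | Z) ∈ Indep(μ)`. -/
def IndepTriple (μ : (V → Bool) → ℝ) (X Y Z : Finset V) : Prop :=
  ∀ (a : Asg X) (b : Asg Y) (c : Asg Z),
    probIf μ (fun f => Agrees f Y b ∧ Agrees f Z c) = 0 ∨
    probIf μ (fun f => Agrees f X a ∧ Agrees f Y b ∧ Agrees f Z c) /
        probIf μ (fun f => Agrees f Y b ∧ Agrees f Z c) =
      probIf μ (fun f => Agrees f X a ∧ Agrees f Z c) /
        probIf μ (fun f => Agrees f Z c)

def PairwiseDisjoint3 (X Y Z : Finset V) : Prop :=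
  Disjoint X Y ∧ Disjoint X Z ∧ Disjoint Y Z

/-- `Indep(μ)` as a set of triples. -/
def IndepSet (μ : (V → Bool) → ℝ) : Set (Finset V × Finset V × Finset V) :=
  { t | PairwiseDisjoint3 t.1 t.2.1 t.2.2 ∧ IndepTriple μ t.1 t.2.1 t.2.2 }

/-- The CPT-I semantics `[B]_{Cpt-I}`. -/
def CptISem (B : GBN V) (I : Set (Finset V × Finset V × Finset V)) :
    Set ((V → Bool) → ℝ) :=
  { μ | μ ∈ CptSem B ∧ I ⊆ IndepSet μ }

/-! d-separation -/

def Adjacent (E : Finset (V × V)) (x y : V) : Prop := (x, y) ∈ E ∨ (y, x) ∈ E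

/-- Reachability along directed edges (including the node itself). -/
def Reaches (E : Finset (V × V)) (x y : V) : Prop :=
  Relation.ReflTransGen (fun a b => (a, b) ∈ E) x y

/-- An intermediate triple `a, w, b` on a path blocks it given `Z`:
either `w ∈ Z` and `w` lies in a chain or a fork, or `w` lies in a collider
and no node reachable from `w` (including `w`) is in `Z`. -/
def BlockedTriple (E : Finset (V × V)) (Z : Finset V) (a w b : V) : Prop :=
  (w ∈ Z ∧ (((a, w) ∈ E ∧ (w, b) ∈ E) ∨ ((b, w) ∈ E ∧ (w, a) ∈ E) ∨
      ((w, a) ∈ E ∧ (w, b) ∈ E))) ∨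
  ((a, w) ∈ E ∧ (b, w) ∈ E ∧ ∀ d, Reaches E w d → d ∉ Z)

/-- A path (as a list of nodes) is blocked given `Z`. -/
def Blocked (E : Finset (V × V)) (Z : Finset V) (W : List V) : Prop :=
  ∃ l₁ a w b l₂, W = l₁ ++ a :: w :: b :: l₂ ∧ BlockedTriple E Z a w b

/-- `x` and `y` are d-separated given `Z`: every undirected simple path
from `x` to `y` is blocked given `Z`. -/
def DSepNodes (E : Finset (V × V)) (x y : V) (Z : Finset V) : Prop :=
  ∀ W : List V, W.Chain' (Adjacent E) → W.Nodup →
    W.head? = some x → W.getLast? = some y → Blocked E Z W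

def DSep (E : Finset (V × V)) (X Y Z : Finset V) : Prop :=
  ∀ x ∈ X, ∀ y ∈ Y, DSepNodes E x y Z

/-- `d-sep(G)` as a set of triples of pairwise disjoint node sets. -/
def DSepSet (E : Finset (V × V)) : Set (Finset V × Finset V × Finset V) :=
  { t | PairwiseDisjoint3 t.1 t.2.1 t.2.2 ∧ DSep E t.1 t.2.1 t.2.2 }

/-- `Close(G)`: add an edge between every ordered pair of distinct initial nodes. -/
def Close (E : Finset (V × V)) : Finset (V × V) :=
  E ∪ ((InitSet E ×ˢ InitSet E).filter fun p => p.1 ≠ p.2)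

/-- `G[C]`: remove all edges into nodes of `C` (so the nodes of `C` are initial). -/
def CutGraph (E : Finset (V × V)) (C : Finset V) : Finset (V × V) :=
  E.filter fun e => e.2 ∉ C

/-- `ι` is a product distribution: it factorizes into its single-node marginals,
i.e. the initial nodes are mutually independent under `ι`. -/
def IsProductDist {U : Finset V} (ι : Asg U → ℝ) : Prop :=
  ∀ b : Asg U,
    ι b = ∏ x : {x // x ∈ U}, ∑ b' : Asg U, if b' x = b x then ι b' else 0

/-! Markov chain notions -/

/-- Reachability in the underlying graph of a DTMC. -/
def MCReach {α : Type} (P : α → α → ℝ) (x y : α) : Prop :=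
  Relation.ReflTransGen (fun a b => 0 < P a b) x y

/-- Bottom strongly connected component of a DTMC: nonempty, closed under
reachability, and strongly connected. -/
def IsBSCC {α : Type} (P : α → α → ℝ) (D : Set α) : Prop :=
  D.Nonempty ∧ (∀ x ∈ D, ∀ y, MCReach P x y → y ∈ D) ∧
    ∀ x ∈ D, ∀ y ∈ D, MCReach P x y

/-- Walks of a given length along positive-probability transitions. -/
def walkLen {α : Type} (P : α → α → ℝ) : ℕ → α → α → Prop
  | 0, x, y => x = y
  | n + 1, x, y => ∃ z, 0 < P x z ∧ walkLen P n z y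

/-- The lengths of the cycles of `D`. -/
def CycleLens {α : Type} (P : α → α → ℝ) (D : Set α) : Set ℕ :=
  { n | 0 < n ∧ ∃ x ∈ D, walkLen P n x x }

/-- `D` is aperiodic: the gcd of the lengths of its cycles equals 1. -/
def AperiodicBSCC {α : Type} (P : α → α → ℝ) (D : Set α) : Prop :=
  ∀ d : ℕ, (∀ n ∈ CycleLens P D, d ∣ n) → d = 1

/-- `D` is periodic: the gcd of the lengths of its cycles is greater than 1. -/
def PeriodicBSCC {α : Type} (P : α → α → ℝ) (D : Set α) : Prop :=
  ∃ d : ℕ, 1 < d ∧ ∀ n ∈ CycleLens P D, d ∣ n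

/-- A GBN is smooth if all CPT entries and all values of `ι` lie in `(0,1)`. -/
def Smooth (B : GBN V) : Prop :=
  (∀ X b, B.cpt X b ∈ Set.Ioo (0 : ℝ) 1) ∧ ∀ d, B.ι d ∈ Set.Ioo (0 : ℝ) 1


/-! ### Auxiliary material for the proof of Statement 6 -/

section Aux6

variable {ι : Type} [DecidableEq ι]

/-- Splitting boolean assignments over a predicate. -/
def splitEquiv (p : ι → Prop) [DecidablePred p] :
    (ι → Bool) ≃ ({i // p i} → Bool) × ({i // ¬ p i} → Bool) where
  toFun x := (fun i => x i.1, fun i => x i.1)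
  invFun y i := if h : p i then y.1 ⟨i, h⟩ else y.2 ⟨i, h⟩
  left_inv x := by
    funext i; by_cases h : p i <;> simp [h]
  right_inv y := by
    refine Prod.ext ?_ ?_ <;> funext i
    · dsimp only; rw [dif_pos i.2]
    · dsimp only; rw [dif_neg i.2]

lemma sum_eq_single_eq {α : Type} [Fintype α] [DecidableEq α] (a0 : α) (f : α → ℝ) :
    (∑ a, if a = a0 then f a else 0) = f a0 := by simp

lemma sum_if_eq_const {α : Type} [Fintype α] [DecidableEq α] (a0 : α) (r : ℝ) :
    (∑ a, if a = a0 then r else 0) = r := by simp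

lemma sum_if_eq {α : Type} [Fintype α] [DecidableEq α] (a0 : α) (f : α → ℝ)
    (p : α → Prop) {inst : ∀ a, Decidable (p a)} (h : ∀ a, p a ↔ a = a0) :
    (∑ a, @ite _ (p a) (inst a) (f a) 0) = f a0 := by
  rw [Finset.sum_congr rfl (fun a _ => by
    rw [if_congr (h a) rfl rfl])]
  simp

lemma sum_fun_bool {κ : Type} [Fintype κ] [DecidableEq κ] (h : κ → Bool → ℝ) :
    (∑ c : κ → Bool, ∏ y, h y (c y)) = ∏ y, (h y false + h y true) := by
  classical
  rw [show (∏ y, (h y false + h y true)) = ∏ y, ∑ v : Bool, h y v by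
        refine Finset.prod_congr rfl fun y _ => ?_
        rw [Fintype.sum_bool]; ring]
  rw [Fintype.prod_sum (fun y v => h y v)]

lemma flip_sum (X : ι) [Fintype ι] (f : (ι → Bool) → ℝ) :
    (∑ b : ι → Bool, f b) =
      ∑ b : ι → Bool, if b X then 0 else (f b + f (Function.update b X true)) := by
  classical
  let φ : (ι → Bool) → (ι → Bool) := fun b => Function.update b X (!b X)
  have inv : Function.Involutive φ := by
    intro b; funext y
    by_cases hy : y = X
    · subst hy; simp [φ]
    · simp [φ, Function.update_of_ne hy]
  have h1 : (∑ b : ι → Bool, if b X then f b else 0) =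
      ∑ b : ι → Bool, if b X then 0 else f (Function.update b X true) := by
    rw [← Equiv.sum_comp (Function.Involutive.toPerm φ inv) (fun b => if b X then f b else 0)]
    refine Finset.sum_congr rfl fun b _ => ?_
    have hco : (Function.Involutive.toPerm φ inv) b = Function.update b X (!b X) := rfl
    rw [hco]
    cases hb : b X
    · simp
    · simp
  have h2 : (∑ b : ι → Bool, f b) =
      (∑ b : ι → Bool, if b X then 0 else f b) + ∑ b : ι → Bool, if b X then f b else 0 := by
    rw [← Finset.sum_add_distrib]
    refine Finset.sum_congr rfl fun b _ => ?_
    cases hb : b X <;> simp [hb]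
  rw [h2, h1, ← Finset.sum_add_distrib]
  refine Finset.sum_congr rfl fun b _ => ?_
  cases hb : b X <;> simp [hb]

lemma prod_ind {α : Type} (s : Finset α) (b : α → Bool) :
    (∏ X ∈ s, if b X then (0:ℝ) else 1) =
      if (∀ X ∈ s, b X = false) then 1 else 0 := by
  classical
  induction s using Finset.induction_on with
  | empty => simp
  | @insert a s ha ih =>
      rw [Finset.prod_insert ha, ih]
      cases hba : b a <;> simp [Finset.forall_mem_insert, hba]

/-- Splitting a sum of a product of two functions depending on complementary
coordinate blocks. -/
lemma split_sum_mul [Fintype ι] (p : ι → Prop) [DecidablePred p]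
    (f g : (ι → Bool) → ℝ)
    (hf : ∀ x y : ι → Bool, (∀ i, p i → x i = y i) → f x = f y)
    (hg : ∀ x y : ι → Bool, (∀ i, ¬ p i → x i = y i) → g x = g y) :
    (∑ x : ι → Bool, f x * g x) =
      (∑ x : ι → Bool, f x *
        ∏ i ∈ Finset.univ.filter (fun i => ¬ p i), (if x i then (0:ℝ) else 1)) *
      (∑ x : ι → Bool, g x *
        ∏ i ∈ Finset.univ.filter p, (if x i then (0:ℝ) else 1)) := by
  classical
  have hconv1 : ∀ x : ι → Bool,
      f x * (∏ i ∈ Finset.univ.filter (fun i => ¬ p i), (if x i then (0:ℝ) else 1)) =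
      if (∀ i, ¬ p i → x i = false) then f x else 0 := by
    intro x
    rw [prod_ind]
    by_cases h : ∀ i, ¬ p i → x i = false
    · rw [if_pos (show ∀ i ∈ Finset.univ.filter (fun i => ¬ p i), x i = false from
        fun i hi => h i (Finset.mem_filter.mp hi).2), if_pos h]; ring
    · rw [if_neg (show ¬ ∀ i ∈ Finset.univ.filter (fun i => ¬ p i), x i = false from
        fun hh => h (fun i hi =>
          hh i (Finset.mem_filter.mpr ⟨Finset.mem_univ i, hi⟩))), if_neg h]; ring
  have hconv2 : ∀ x : ι → Bool,
      g x * (∏ i ∈ Finset.univ.filter p, (if x i then (0:ℝ) else 1)) =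
      if (∀ i, p i → x i = false) then g x else 0 := by
    intro x
    rw [prod_ind]
    by_cases h : ∀ i, p i → x i = false
    · rw [if_pos (show ∀ i ∈ Finset.univ.filter p, x i = false from
        fun i hi => h i (Finset.mem_filter.mp hi).2), if_pos h]; ring
    · rw [if_neg (show ¬ ∀ i ∈ Finset.univ.filter p, x i = false from
        fun hh => h (fun i hi =>
          hh i (Finset.mem_filter.mpr ⟨Finset.mem_univ i, hi⟩))), if_neg h]; ring
  rw [Finset.sum_congr rfl (fun x _ => hconv1 x), Finset.sum_congr rfl (fun x _ => hconv2 x)]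
  set e := splitEquiv p with he
  have key : ∀ (F : (ι → Bool) → ℝ), (∑ x : ι → Bool, F x) = ∑ y, F (e.symm y) :=
    fun F => (Equiv.sum_comp e.symm F).symm
  have hsymm : ∀ (u : {i // p i} → Bool) (v : {i // ¬ p i} → Bool) (i : ι),
      e.symm (u, v) i = if h : p i then u ⟨i, h⟩ else v ⟨i, h⟩ := fun _ _ _ => rfl
  have hfv : ∀ u v, f (e.symm (u, v)) = f (e.symm (u, fun _ => false)) := by
    intro u v
    refine hf _ _ fun i hi => by simp [hsymm, hi]
  have hgv : ∀ u v, g (e.symm (u, v)) = g (e.symm (fun _ => false, v)) := by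
    intro u v
    refine hg _ _ fun i hi => by simp [hsymm, hi]
  have hA : (∑ x : ι → Bool, if (∀ i, ¬ p i → x i = false) then f x else 0) =
      ∑ u : {i // p i} → Bool, f (e.symm (u, fun _ => false)) := by
    rw [key (fun x => if (∀ i, ¬ p i → x i = false) then f x else 0),
      Fintype.sum_prod_type]
    refine Finset.sum_congr rfl fun u _ => ?_
    have hiff : ∀ v : {i // ¬ p i} → Bool,
        (∀ i, ¬ p i → e.symm (u, v) i = false) ↔ v = fun _ => false := by
      intro v
      constructor
      · intro h; funext i
        have := h i.1 i.2
        simpa [hsymm, i.2] using this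
      · intro h i hi; subst h; simp [hsymm, hi]
    rw [Finset.sum_congr rfl (fun v _ => by
      rw [if_congr (hiff v) (hfv u v) rfl])]
    exact sum_if_eq_const (fun _ => false) (f (e.symm (u, fun _ => false)))
  have hB : (∑ x : ι → Bool, if (∀ i, p i → x i = false) then g x else 0) =
      ∑ v : {i // ¬ p i} → Bool, g (e.symm (fun _ => false, v)) := by
    rw [key (fun x => if (∀ i, p i → x i = false) then g x else 0),
      Fintype.sum_prod_type, Finset.sum_comm]
    refine Finset.sum_congr rfl fun v _ => ?_
    have hiff : ∀ u : {i // p i} → Bool,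
        (∀ i, p i → e.symm (u, v) i = false) ↔ u = fun _ => false := by
      intro u
      constructor
      · intro h; funext i
        have := h i.1 i.2
        simpa [hsymm, i.2] using this
      · intro h i hi; subst h; simp [hsymm, hi]
    rw [Finset.sum_congr rfl (fun u _ => by
      rw [if_congr (hiff u) (hgv u v) rfl])]
    exact sum_if_eq_const (fun _ => false) (g (e.symm (fun _ => false, v)))
  rw [hA, hB, key (fun x => f x * g x), Fintype.sum_prod_type, Finset.sum_mul_sum]
  refine Finset.sum_congr rfl fun u _ => Finset.sum_congr rfl fun v _ => ?_
  rw [hfv u v, hgv u v]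

end Aux6

section BN6

variable {V : Type} [Fintype V] [DecidableEq V]

lemma copyProb_nonneg (B : GBN V) (X : V) (v : Bool) (b : V → Bool) :
    0 ≤ copyProb B X v b := by
  unfold copyProb
  cases v
  · simp [sub_nonneg, B.cpt_le_one]
  · simp [B.cpt_nonneg]

lemma copyProb_sum_one (B : GBN V) (X : V) (b : V → Bool) :
    copyProb B X false b + copyProb B X true b = 1 := by
  unfold copyProb; simp

lemma copyProb_congr (B : GBN V) (X : V) (v : Bool) {b b' : V → Bool}
    (h : ∀ x ∈ Pre B.edges X, b x = b' x) :
    copyProb B X v b = copyProb B X v b' := by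
  have : (fun p : {x // x ∈ Pre B.edges X} => b p.1) = fun p => b' p.1 := by
    funext p; exact h p.1 p.2
  unfold copyProb; rw [this]

lemma Pre_eq_empty_of_init {E : Finset (V × V)} {X : V} (hX : X ∈ InitSet E) :
    Pre E X = ∅ := (Finset.mem_filter.mp hX).2

lemma copyProb_init (B : GBN V) {X : V} (hX : X ∈ InitSet B.edges) (v : Bool)
    (b b' : V → Bool) : copyProb B X v b = copyProb B X v b' :=
  copyProb_congr B X v (fun x hx => by
    rw [Pre_eq_empty_of_init hX] at hx; exact absurd hx (Finset.notMem_empty x))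

set_option linter.unusedSectionVars false in
lemma attach_eq_univ (C : Finset V) : C.attach = Finset.univ := by
  ext y; simp

/-- The product of the CPT entries of the copies sums to one. -/
lemma copies_sum_one (B : GBN V) (C : Finset V) (b : V → Bool) :
    (∑ c : Asg C, ∏ y ∈ C.attach, copyProb B y.1 (c y) b) = 1 := by
  rw [Finset.sum_congr rfl (fun c _ => by rw [attach_eq_univ])]
  have key := sum_fun_bool (fun (y : {x // x ∈ C}) (v : Bool) => copyProb B y.1 v b)
  rw [key]
  rw [Finset.prod_congr rfl (fun y _ => copyProb_sum_one B y.1 b)]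
  simp

lemma distDissect_nonneg (B : GBN V) (C : Finset V) (γ : Asg C → ℝ)
    (hγ : ∀ c, 0 ≤ γ c) (b : V → Bool) (c : Asg C) :
    0 ≤ distDissect B C γ b c := by
  unfold distDissect
  refine mul_nonneg (mul_nonneg (mul_nonneg (B.ι_dist.1 _) (hγ _)) ?_) ?_
  · exact Finset.prod_nonneg fun X _ => copyProb_nonneg B X _ b
  · exact Finset.prod_nonneg fun Y _ => copyProb_nonneg B Y.1 _ b

/-- The `C`-marginal of `Next B C γ` is given by summing the dissected
distribution over the original assignments. -/
lemma marginal_next (B : GBN V) (C : Finset V) (γ : Asg C → ℝ) (c : Asg C) :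
    marginal (Next B C γ) C c = ∑ b : V → Bool, distDissect B C γ b c := by
  unfold marginal probIf Next
  have step1 : ∀ (a : V → Bool) (inst : Decidable (Agrees a C c)),
      (@ite _ (Agrees a C c) inst
        (∑ b : V → Bool, if (∀ x : V, x ∉ C → b x = a x) then
          distDissect B C γ b (fun y => a y.1) else 0) 0) =
      ∑ b : V → Bool, (if (Agrees a C c ∧ ∀ x : V, x ∉ C → b x = a x) then
        distDissect B C γ b c else 0) := by
    intro a inst
    by_cases ha : Agrees a C c
    · rw [if_pos ha]
      refine Finset.sum_congr rfl fun b _ => ?_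
      have hres : (fun y : {x // x ∈ C} => a y.1) = c := by
        funext y; exact ha y
      by_cases hb : ∀ x : V, x ∉ C → b x = a x
      · rw [if_pos hb, if_pos ⟨ha, hb⟩, hres]
      · rw [if_neg hb, if_neg (fun h => hb h.2)]
    · rw [if_neg ha]
      rw [Finset.sum_congr rfl (fun b _ => if_neg (fun h => ha h.1))]
      simp
  refine Eq.trans (Finset.sum_congr rfl fun a _ => step1 a _) ?_
  rw [Finset.sum_comm]
  refine Finset.sum_congr rfl fun b _ => ?_
  have hiff : ∀ a : V → Bool,
      (Agrees a C c ∧ ∀ x : V, x ∉ C → b x = a x) ↔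
        a = fun x => if h : x ∈ C then c ⟨x, h⟩ else b x := by
    intro a
    constructor
    · rintro ⟨h1, h2⟩
      funext x
      by_cases hx : x ∈ C
      · rw [dif_pos hx]; exact h1 ⟨x, hx⟩
      · rw [dif_neg hx]; exact (h2 x hx).symm
    · rintro rfl
      constructor
      · intro y; dsimp only; rw [dif_pos y.2]
      · intro x hx; dsimp only; rw [dif_neg hx]
  exact sum_if_eq _ (fun _ => distDissect B C γ b c) _ hiff

lemma cutsetP_eq (B : GBN V) (C : Finset V) (b c : Asg C) :
    cutsetP B C b c = ∑ b' : V → Bool, distDissect B C (DiracD b) b' c :=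
  marginal_next B C (DiracD b) c

lemma cutsetP_nonneg (B : GBN V) (C : Finset V) (b c : Asg C) :
    0 ≤ cutsetP B C b c := by
  rw [cutsetP_eq]
  refine Finset.sum_nonneg fun b' _ => distDissect_nonneg B C _ (fun c' => ?_) b' c
  unfold DiracD; split <;> norm_num

lemma distDissect_lin (B : GBN V) (C : Finset V) (γ : Asg C → ℝ)
    (b' : V → Bool) (c : Asg C) :
    distDissect B C γ b' c =
      ∑ b0 : Asg C, γ b0 * distDissect B C (DiracD b0) b' c := by
  unfold distDissect DiracD
  have : ∀ b0 : Asg C,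
      γ b0 * (B.ι (fun x => b' x.1) * (if (fun x : {x // x ∈ C} => b' x.1) = b0 then (1:ℝ) else 0) *
        (∏ X ∈ (Finset.univ \ InitSet B.edges) \ C, copyProb B X (b' X) b') *
        ∏ Y ∈ C.attach, copyProb B Y.1 (c Y) b') =
      if b0 = (fun x : {x // x ∈ C} => b' x.1) then
        (B.ι (fun x => b' x.1) * γ b0 *
        (∏ X ∈ (Finset.univ \ InitSet B.edges) \ C, copyProb B X (b' X) b') *
        ∏ Y ∈ C.attach, copyProb B Y.1 (c Y) b') else 0 := by
    intro b0
    by_cases h : b0 = fun x : {x // x ∈ C} => b' x.1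
    · rw [if_pos h, if_pos h.symm]; ring
    · rw [if_neg h, if_neg (fun hh => h hh.symm)]; ring
  rw [Finset.sum_congr rfl (fun b0 _ => this b0)]
  rw [sum_eq_single_eq (fun x : {x // x ∈ C} => b' x.1)
    (fun b0 => B.ι (fun x => b' x.1) * γ b0 *
        (∏ X ∈ (Finset.univ \ InitSet B.edges) \ C, copyProb B X (b' X) b') *
        ∏ Y ∈ C.attach, copyProb B Y.1 (c Y) b')]

lemma marginal_next_eq_vecMul (B : GBN V) (C : Finset V) (γ : Asg C → ℝ) :
    marginal (Next B C γ) C = vecMul γ (cutsetP B C) := by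
  funext c
  rw [marginal_next]
  unfold vecMul
  rw [Finset.sum_congr rfl (fun b' _ => distDissect_lin B C γ b' c), Finset.sum_comm]
  refine Finset.sum_congr rfl fun b0 _ => ?_
  rw [cutsetP_eq, Finset.mul_sum]

lemma nextSeq_eq_matIter (B : GBN V) (C : Finset V) (γ0 : Asg C → ℝ) (n : ℕ) :
    nextSeq B C γ0 n = matIter (cutsetP B C) γ0 n := by
  induction n with
  | zero => rfl
  | succ n ih =>
    show marginal (Next B C (nextSeq B C γ0 n)) C = vecMul (matIter (cutsetP B C) γ0 n) _
    rw [marginal_next_eq_vecMul, ih]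

lemma mem_Pre {E : Finset (V × V)} {x X : V} : x ∈ Pre E X ↔ (x, X) ∈ E := by
  unfold Pre
  simp only [Finset.mem_image, Finset.mem_filter]
  constructor
  · rintro ⟨e, ⟨he, h2⟩, h1⟩
    have : e = (x, X) := by
      cases e; cases h1; cases h2; rfl
    rwa [this] at he
  · intro h; exact ⟨(x, X), ⟨h, rfl⟩, rfl⟩

lemma exists_sink {E : Finset (V × V)} {C : Finset V} (hC : IsCutset E C)
    (S : Finset V) (hSC : ∀ x ∈ S, x ∉ C) (hne : S.Nonempty) :
    ∃ X ∈ S, ∀ Y ∈ S, (X, Y) ∉ E := by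
  classical
  let r : V → V → Prop := fun a b => a ∈ S ∧ b ∈ S ∧ (b, a) ∈ E
  have hirr : ∀ x, ¬ Relation.TransGen r x x := by
    intro x hx
    refine hC x ?_
    have swap : Relation.TransGen
        (Function.swap (fun a b => (a, b) ∈ E ∧ a ∉ C ∧ b ∉ C)) x x := by
      refine Relation.TransGen.mono ?_ _ _ hx
      rintro a b ⟨ha, hb, he⟩
      exact ⟨he, hSC b hb, hSC a ha⟩
    exact Relation.transGen_swap.mp swap
  haveI : IsTrans V (Relation.TransGen r) := ⟨fun a b c => Relation.TransGen.trans⟩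
  haveI : IsIrrefl V (Relation.TransGen r) := ⟨hirr⟩
  have hwf := Finite.wellFounded_of_trans_of_irrefl (Relation.TransGen r)
  obtain ⟨X, hXS, hmin⟩ := hwf.has_min (↑S : Set V) (by
    obtain ⟨x, hx⟩ := hne; exact ⟨x, Finset.mem_coe.mpr hx⟩)
  refine ⟨X, Finset.mem_coe.mp hXS, fun Y hY hXY => ?_⟩
  exact hmin Y (Finset.mem_coe.mpr hY)
    (Relation.TransGen.single ⟨hY, Finset.mem_coe.mp hXS, hXY⟩)

/-- The partially eliminated sums appearing in the computation of the row sums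
of the cutset chain. -/
def elimSum (B : GBN V) (C : Finset V) (γ : Asg C → ℝ) (S : Finset V) : ℝ :=
  ∑ b : V → Bool, B.ι (fun x => b x.1) * γ (fun x => b x.1) *
    (∏ X ∈ S, copyProb B X (b X) b) *
    (∏ X ∈ ((Finset.univ \ InitSet B.edges) \ C) \ S, (if b X then (0:ℝ) else 1))

lemma elim_const (B : GBN V) (C : Finset V) (hC : IsCutset B.edges C)
    (γ : Asg C → ℝ) :
    ∀ S : Finset V, S ⊆ (Finset.univ \ InitSet B.edges) \ C →
      elimSum B C γ S = elimSum B C γ ∅ := by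
  classical
  intro S
  induction S using Finset.strongInduction with
  | _ S ih =>
    intro hS
    rcases S.eq_empty_or_nonempty with rfl | hne
    · rfl
    · have hSC : ∀ x ∈ S, x ∉ C := fun x hx => by
        have := hS hx
        simp only [Finset.mem_sdiff, Finset.mem_univ] at this
        exact this.2
      obtain ⟨X, hXS, hsink⟩ := exists_sink hC S hSC hne
      have hXC : X ∉ C := hSC X hXS
      have hXI : X ∉ InitSet B.edges := by
        have := hS hXS
        simp only [Finset.mem_sdiff, Finset.mem_univ] at this
        exact this.1.2
      have hXT : X ∈ (Finset.univ \ InitSet B.edges) \ C := hS hXS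
      -- step: elimSum S = elimSum (S.erase X)
      have hstep : elimSum B C γ S = elimSum B C γ (S.erase X) := by
        unfold elimSum
        rw [flip_sum X]
        refine Finset.sum_congr rfl fun b _ => ?_
        by_cases hbX : b X = true
        · rw [if_pos hbX]
          have h4 : ((Finset.univ \ InitSet B.edges) \ C) \ S.erase X =
              insert X (((Finset.univ \ InitSet B.edges) \ C) \ S) := by
            ext Z
            simp only [Finset.mem_sdiff, Finset.mem_insert, Finset.mem_erase,
              Finset.mem_univ, true_and]
            constructor
            · rintro ⟨⟨hZ1, hZ2⟩, hZ3⟩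
              by_cases hZX : Z = X
              · exact Or.inl hZX
              · exact Or.inr ⟨⟨hZ1, hZ2⟩, fun hZS => hZ3 ⟨hZX, hZS⟩⟩
            · rintro (rfl | ⟨⟨hZ1, hZ2⟩, hZS⟩)
              · refine ⟨⟨hXI, hXC⟩, fun hc => hc.1 rfl⟩
              · exact ⟨⟨hZ1, hZ2⟩, fun hc => hZS hc.2⟩
          rw [h4, Finset.prod_insert (by
            simp only [Finset.mem_sdiff, Finset.mem_univ, true_and, not_and, not_not]
            intro _; exact hXS), if_pos hbX]
          ring
        · have hbX' : b X = false := by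
            cases hb : b X
            · rfl
            · exact absurd hb hbX
          -- update invariance facts
          set bu := Function.update b X true with hbu
          have hXPre : ∀ X' ∈ S, X ∉ Pre B.edges X' := fun X' hX' hmem =>
            hsink X' hX' (mem_Pre.mp hmem)
          have hglobal : ∀ (x : V), x ≠ X → bu x = b x := fun x hx =>
            Function.update_of_ne hx _ _
          have hι : (fun x : {x // x ∈ InitSet B.edges} => bu x.1) =
              fun x => b x.1 := by
            funext x; exact hglobal x.1 (fun h => hXI (h ▸ x.2))
          have hγ : (fun x : {x // x ∈ C} => bu x.1) = fun x => b x.1 := by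
            funext x; exact hglobal x.1 (fun h => hXC (h ▸ x.2))
          have hcopyS : ∀ X' ∈ S.erase X,
              copyProb B X' (bu X') bu = copyProb B X' (b X') b := by
            intro X' hX'
            have hne' : X' ≠ X := (Finset.mem_erase.mp hX').1
            rw [hglobal X' hne']
            exact copyProb_congr B X' _ (fun x hx => hglobal x
              (fun h => hXPre X' (Finset.mem_erase.mp hX').2 (h ▸ hx)))
          have hcopyX : copyProb B X true bu = copyProb B X true b :=
            copyProb_congr B X true (fun x hx => hglobal x
              (fun h => hXPre X hXS (h ▸ hx)))
          have hind : ∀ X' ∈ ((Finset.univ \ InitSet B.edges) \ C) \ S,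
              bu X' = b X' := by
            intro X' hX'
            refine hglobal X' fun h => ?_
            subst h
            exact (Finset.mem_sdiff.mp hX').2 hXS
          have hprodS : (∏ X' ∈ S, copyProb B X' (b X') b) =
              copyProb B X false b * ∏ X' ∈ S.erase X, copyProb B X' (b X') b := by
            rw [← Finset.mul_prod_erase S _ hXS, hbX']
          have hprodSu : (∏ X' ∈ S, copyProb B X' (bu X') bu) =
              copyProb B X true b * ∏ X' ∈ S.erase X, copyProb B X' (b X') b := by
            rw [← Finset.mul_prod_erase S _ hXS]
            have h1 : bu X = true := Function.update_self _ _ _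
            rw [h1, hcopyX]
            congr 1
            exact Finset.prod_congr rfl hcopyS
          have hindprod : (∏ X' ∈ ((Finset.univ \ InitSet B.edges) \ C) \ S,
              (if bu X' then (0:ℝ) else 1)) =
              ∏ X' ∈ ((Finset.univ \ InitSet B.edges) \ C) \ S,
              (if b X' then (0:ℝ) else 1) :=
            Finset.prod_congr rfl (fun X' hX' => by rw [hind X' hX'])
          have h4 : ((Finset.univ \ InitSet B.edges) \ C) \ S.erase X =
              insert X (((Finset.univ \ InitSet B.edges) \ C) \ S) := by
            ext Z
            simp only [Finset.mem_sdiff, Finset.mem_insert, Finset.mem_erase,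
              Finset.mem_univ, true_and]
            constructor
            · rintro ⟨⟨hZ1, hZ2⟩, hZ3⟩
              by_cases hZX : Z = X
              · exact Or.inl hZX
              · exact Or.inr ⟨⟨hZ1, hZ2⟩, fun hZS => hZ3 ⟨hZX, hZS⟩⟩
            · rintro (rfl | ⟨⟨hZ1, hZ2⟩, hZS⟩)
              · refine ⟨⟨hXI, hXC⟩, fun hc => hc.1 rfl⟩
              · exact ⟨⟨hZ1, hZ2⟩, fun hc => hZS hc.2⟩
          have hcs := copyProb_sum_one B X b
          rw [if_neg hbX, hι, hγ, hprodS, hprodSu, hindprod, h4,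
            Finset.prod_insert (by
              simp only [Finset.mem_sdiff, Finset.mem_univ, true_and, not_and, not_not]
              intro _; exact hXS), if_neg hbX, ← hcs]
          ring
      rw [hstep]
      exact ih (S.erase X) (Finset.erase_ssubset hXS)
        ((Finset.erase_subset _ _).trans hS)

/-- The marginal of `ι` on `Init ∩ C`, evaluated at a cutset assignment. -/
def muF (B : GBN V) (C : Finset V) (b : Asg C) : ℝ :=
  ∑ d : Asg (InitSet B.edges),
    if (∀ (x : V) (hI : x ∈ InitSet B.edges) (hxC : x ∈ C), d ⟨x, hI⟩ = b ⟨x, hxC⟩)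
    then B.ι d else 0

lemma sum_split {ι : Type} [Fintype ι] [DecidableEq ι] (p : ι → Prop)
    [DecidablePred p] (F : (ι → Bool) → ℝ) :
    ∑ x : ι → Bool, F x =
      ∑ u : {i // p i} → Bool, ∑ v : {i // ¬ p i} → Bool,
        F (fun i => if h : p i then u ⟨i, h⟩ else v ⟨i, h⟩) := by
  rw [← Equiv.sum_comp (splitEquiv p).symm F, Fintype.sum_prod_type]
  rfl

lemma sum_splitF {V : Type} [Fintype V] [DecidableEq V] (U : Finset V)
    (F : (V → Bool) → ℝ) :
    ∑ x : V → Bool, F x =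
      ∑ u : Asg U, ∑ v : {i // ¬ i ∈ U} → Bool,
        F (fun i => if h : i ∈ U then u ⟨i, h⟩ else v ⟨i, h⟩) := by
  rw [sum_split (fun x : V => x ∈ U) F]
  refine Finset.sum_congr ?_ fun u _ => rfl
  congr 1
  exact Subsingleton.elim _ _

lemma elim_empty_eq_mu (B : GBN V) (C : Finset V) (b : Asg C) :
    elimSum B C (DiracD b) ∅ = muF B C b := by
  classical
  unfold elimSum muF
  have hsummand : ∀ b' : V → Bool,
      B.ι (fun x => b' x.1) * DiracD b (fun x => b' x.1) *
        (∏ X ∈ (∅ : Finset V), copyProb B X (b' X) b') *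
        (∏ X ∈ ((Finset.univ \ InitSet B.edges) \ C) \ ∅, if b' X then (0:ℝ) else 1) =
      if ((fun x : {x // x ∈ C} => b' x.1) = b ∧
          ∀ X ∈ (Finset.univ \ InitSet B.edges) \ C, b' X = false)
        then B.ι (fun x => b' x.1) else 0 := by
    intro b'
    rw [Finset.prod_empty, Finset.sdiff_empty, prod_ind]
    unfold DiracD
    by_cases h1 : (fun x : {x // x ∈ C} => b' x.1) = b
    · by_cases h2 : ∀ X ∈ (Finset.univ \ InitSet B.edges) \ C, b' X = false
      · rw [if_pos h1, if_pos h2, if_pos ⟨h1, h2⟩]; ring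
      · rw [if_pos h1, if_neg h2, if_neg (fun h => h2 h.2)]; ring
    · rw [if_neg h1, if_neg (fun h : (((fun x : {x // x ∈ C} => b' x.1) = b) ∧
          ∀ X ∈ (Finset.univ \ InitSet B.edges) \ C, b' X = false) => h1 h.1)]
      ring
  rw [Finset.sum_congr rfl (fun b' _ => hsummand b')]
  rw [sum_splitF (InitSet B.edges)]
  refine Finset.sum_congr rfl fun d _ => ?_
  set glue := fun (v : {i // ¬ i ∈ InitSet B.edges} → Bool) (i : V) =>
    if h : i ∈ InitSet B.edges then d ⟨i, h⟩ else v ⟨i, h⟩ with hglue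
  have hrestr : ∀ v, (fun x : {x // x ∈ InitSet B.edges} => glue v x.1) = d := by
    intro v; funext x; simp only [hglue]; rw [dif_pos x.2]
  set e0 : {i // ¬ i ∈ InitSet B.edges} → Bool := fun x =>
    if h : x.1 ∈ C then b ⟨x.1, h⟩ else false with he0
  have hiff : ∀ v, (((fun x : {x // x ∈ C} => glue v x.1) = b ∧
      ∀ X ∈ (Finset.univ \ InitSet B.edges) \ C, glue v X = false)) ↔
      ((∀ (x : V) (hI : x ∈ InitSet B.edges) (hxC : x ∈ C),
        d ⟨x, hI⟩ = b ⟨x, hxC⟩) ∧ v = e0) := by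
    intro v
    constructor
    · rintro ⟨h1, h2⟩
      constructor
      · intro x hI hxC
        have := congrFun h1 ⟨x, hxC⟩
        simp only [hglue] at this
        rw [dif_pos hI] at this
        exact this
      · funext x
        by_cases hc : x.1 ∈ C
        · have := congrFun h1 ⟨x.1, hc⟩
          simp only [hglue] at this
          rw [dif_neg x.2] at this
          simp only [he0]
          rw [dif_pos hc, this]
        · have hX : x.1 ∈ (Finset.univ \ InitSet B.edges) \ C := by
            simp only [Finset.mem_sdiff, Finset.mem_univ, true_and]
            exact ⟨x.2, hc⟩
          have := h2 x.1 hX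
          simp only [hglue] at this
          rw [dif_neg x.2] at this
          simp only [he0]
          rw [dif_neg hc, this]
    · rintro ⟨hQ, rfl⟩
      constructor
      · funext x
        simp only [hglue]
        by_cases hI : x.1 ∈ InitSet B.edges
        · rw [dif_pos hI]; exact hQ x.1 hI x.2
        · rw [dif_neg hI]
          simp only [he0]
          rw [dif_pos x.2]
      · intro X hX
        simp only [Finset.mem_sdiff, Finset.mem_univ, true_and] at hX
        simp only [hglue]
        rw [dif_neg hX.1]
        simp only [he0]
        rw [dif_neg hX.2]
  by_cases hQ : ∀ (x : V) (hI : x ∈ InitSet B.edges) (hxC : x ∈ C),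
      d ⟨x, hI⟩ = b ⟨x, hxC⟩
  · rw [if_pos hQ]
    rw [Finset.sum_congr rfl (fun v _ => by
      rw [if_congr ((hiff v).trans (and_iff_right hQ)) (congrArg B.ι (hrestr v)) rfl])]
    exact sum_if_eq_const e0 (B.ι d)
  · rw [if_neg hQ]
    rw [Finset.sum_congr rfl (fun v _ => by
      rw [if_neg (fun h => hQ ((hiff v).mp h).1)])]
    simp

/-- Row sums of the cutset Markov chain: the marginal probability of the
current cutset state restricted to the initial nodes. -/
lemma rowsum_eq_mu (B : GBN V) (C : Finset V) (hC : IsCutset B.edges C)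
    (b : Asg C) : (∑ c : Asg C, cutsetP B C b c) = muF B C b := by
  classical
  have h1 : (∑ c : Asg C, cutsetP B C b c) =
      elimSum B C (DiracD b) ((Finset.univ \ InitSet B.edges) \ C) := by
    rw [Finset.sum_congr rfl (fun c _ => cutsetP_eq B C b c), Finset.sum_comm]
    unfold elimSum
    refine Finset.sum_congr rfl fun b' _ => ?_
    unfold distDissect
    rw [← Finset.mul_sum, copies_sum_one B C b', mul_one, Finset.sdiff_self,
      Finset.prod_empty, mul_one]
  rw [h1, elim_const B C hC (DiracD b) _ (le_refl _), elim_empty_eq_mu]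

lemma mu_nonneg (B : GBN V) (C : Finset V) (b : Asg C) : 0 ≤ muF B C b := by
  refine Finset.sum_nonneg fun d _ => ?_
  split
  · exact B.ι_dist.1 d
  · exact le_refl 0

lemma mu_le_one (B : GBN V) (C : Finset V) (b : Asg C) : muF B C b ≤ 1 := by
  rw [← B.ι_dist.2]
  refine Finset.sum_le_sum fun d _ => ?_
  split
  · exact le_refl _
  · exact B.ι_dist.1 d

lemma mu_congr (B : GBN V) (C : Finset V) {b b' : Asg C}
    (h : ∀ y : {x // x ∈ C}, y.1 ∈ InitSet B.edges → b y = b' y) :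
    muF B C b = muF B C b' := by
  unfold muF
  refine Finset.sum_congr rfl fun d _ => ?_
  refine if_congr ?_ rfl rfl
  constructor
  · intro hq x hI hxC; rw [hq x hI hxC, h ⟨x, hxC⟩ hI]
  · intro hq x hI hxC; rw [hq x hI hxC, ← h ⟨x, hxC⟩ hI]

lemma mu_pin_sum (B : GBN V) (C : Finset V) :
    (∑ b : Asg C, muF B C b *
      ∏ y ∈ Finset.univ.filter (fun y : {x // x ∈ C} => y.1 ∉ InitSet B.edges),
        (if b y then (0:ℝ) else 1)) = 1 := by
  classical
  have hconv : ∀ b : Asg C,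
      muF B C b * (∏ y ∈ Finset.univ.filter
        (fun y : {x // x ∈ C} => y.1 ∉ InitSet B.edges), (if b y then (0:ℝ) else 1)) =
      if (∀ y : {x // x ∈ C}, y.1 ∉ InitSet B.edges → b y = false)
        then muF B C b else 0 := by
    intro b
    rw [prod_ind]
    by_cases h : ∀ y : {x // x ∈ C}, y.1 ∉ InitSet B.edges → b y = false
    · rw [if_pos (show ∀ y ∈ Finset.univ.filter
          (fun y : {x // x ∈ C} => y.1 ∉ InitSet B.edges), b y = false from
        fun i hi => h i (Finset.mem_filter.mp hi).2), if_pos h]; ring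
    · rw [if_neg (show ¬ ∀ y ∈ Finset.univ.filter
          (fun y : {x // x ∈ C} => y.1 ∉ InitSet B.edges), b y = false from
        fun hh => h (fun i hi =>
          hh i (Finset.mem_filter.mpr ⟨Finset.mem_univ i, hi⟩))), if_neg h]; ring
  rw [Finset.sum_congr rfl (fun b _ => hconv b)]
  unfold muF
  have step : ∀ b : Asg C,
      (if (∀ y : {x // x ∈ C}, y.1 ∉ InitSet B.edges → b y = false)
        then (∑ d : Asg (InitSet B.edges),
          if (∀ (x : V) (hI : x ∈ InitSet B.edges) (hxC : x ∈ C),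
            d ⟨x, hI⟩ = b ⟨x, hxC⟩) then B.ι d else 0) else 0) =
      ∑ d : Asg (InitSet B.edges),
        if ((∀ y : {x // x ∈ C}, y.1 ∉ InitSet B.edges → b y = false) ∧
          (∀ (x : V) (hI : x ∈ InitSet B.edges) (hxC : x ∈ C),
            d ⟨x, hI⟩ = b ⟨x, hxC⟩)) then B.ι d else 0 := by
    intro b
    by_cases hp : ∀ y : {x // x ∈ C}, y.1 ∉ InitSet B.edges → b y = false
    · rw [if_pos hp]
      refine Finset.sum_congr rfl fun d _ => ?_
      refine if_congr ?_ rfl rfl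
      exact (and_iff_right hp).symm
    · rw [if_neg hp]
      rw [Finset.sum_congr rfl (fun d _ => if_neg (fun h => hp h.1))]
      simp
  rw [Finset.sum_congr rfl (fun b _ => step b), Finset.sum_comm]
  have inner : ∀ d : Asg (InitSet B.edges),
      (∑ b : Asg C, if ((∀ y : {x // x ∈ C}, y.1 ∉ InitSet B.edges → b y = false) ∧
        (∀ (x : V) (hI : x ∈ InitSet B.edges) (hxC : x ∈ C),
          d ⟨x, hI⟩ = b ⟨x, hxC⟩)) then B.ι d else 0) = B.ι d := by
    intro d
    refine sum_if_eq (fun y : {x // x ∈ C} =>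
      if h : y.1 ∈ InitSet B.edges then d ⟨y.1, h⟩ else false) (fun _ => B.ι d) _ ?_
    intro b
    constructor
    · rintro ⟨h1, h2⟩
      funext y
      by_cases hI : y.1 ∈ InitSet B.edges
      · rw [dif_pos hI]; exact (h2 y.1 hI y.2).symm
      · rw [dif_neg hI]; exact h1 y hI
    · rintro rfl
      constructor
      · intro y hI; dsimp only; rw [dif_neg hI]
      · intro x hI hxC; dsimp only; rw [dif_pos hI]
  rw [Finset.sum_congr rfl (fun d _ => inner d)]
  exact B.ι_dist.2

/-- The product distribution over the cutset used in the definition of `lamF`: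
the initial cutset nodes get their CPT values, the others are pinned to
`false`. -/
def Apin (B : GBN V) (C : Finset V) (c : Asg C) : ℝ :=
  ∏ y ∈ C.attach, (if y.1 ∈ InitSet B.edges
    then copyProb B y.1 (c y) (fun _ => false) else if c y then 0 else 1)

lemma Apin_nonneg (B : GBN V) (C : Finset V) (c : Asg C) : 0 ≤ Apin B C c := by
  refine Finset.prod_nonneg fun y _ => ?_
  split
  · exact copyProb_nonneg B y.1 _ _
  · split <;> norm_num

lemma Apin_sum_one (B : GBN V) (C : Finset V) : (∑ c : Asg C, Apin B C c) = 1 := by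
  unfold Apin
  rw [Finset.sum_congr rfl (fun c _ => by rw [attach_eq_univ])]
  have key := sum_fun_bool (fun (y : {x // x ∈ C}) (v : Bool) =>
    if y.1 ∈ InitSet B.edges
      then copyProb B y.1 v (fun _ => false) else if v then (0:ℝ) else 1)
  rw [key]
  refine Finset.prod_eq_one fun y _ => ?_
  by_cases hI : y.1 ∈ InitSet B.edges
  · simp [hI, copyProb_sum_one]
  · simp [hI]

/-- The per-step mass-loss factor of the cutset chain. -/
def lamF (B : GBN V) (C : Finset V) : ℝ := ∑ c : Asg C, Apin B C c * muF B C c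

lemma lam_nonneg (B : GBN V) (C : Finset V) : 0 ≤ lamF B C :=
  Finset.sum_nonneg fun c _ => mul_nonneg (Apin_nonneg B C c) (mu_nonneg B C c)

lemma lam_le_one (B : GBN V) (C : Finset V) : lamF B C ≤ 1 := by
  rw [← Apin_sum_one B C]
  refine Finset.sum_le_sum fun c _ => ?_
  calc Apin B C c * muF B C c ≤ Apin B C c * 1 :=
        mul_le_mul_of_nonneg_left (mu_le_one B C c) (Apin_nonneg B C c)
    _ = Apin B C c := mul_one _

/-- The key splitting identity used for the quasi-stationarity of `muF`. -/
lemma inner_split (B : GBN V) (C : Finset V) (b' : V → Bool) :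
    (∑ c : Asg C, (∏ y ∈ C.attach, copyProb B y.1 (c y) b') * muF B C c) =
      lamF B C := by
  classical
  set p : {x // x ∈ C} → Prop := fun y => y.1 ∈ InitSet B.edges with hp
  have hsplitprod : ∀ c : Asg C,
      (∏ y ∈ C.attach, copyProb B y.1 (c y) b') =
        (∏ y ∈ Finset.univ.filter p, copyProb B y.1 (c y) b') *
        ∏ y ∈ Finset.univ.filter (fun y => ¬ p y), copyProb B y.1 (c y) b' := by
    intro c
    rw [attach_eq_univ, ← Finset.prod_filter_mul_prod_filter_not Finset.univ p]
  have step : ∀ c : Asg C,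
      (∏ y ∈ C.attach, copyProb B y.1 (c y) b') * muF B C c =
      ((∏ y ∈ Finset.univ.filter p, copyProb B y.1 (c y) b') * muF B C c) *
        ∏ y ∈ Finset.univ.filter (fun y => ¬ p y), copyProb B y.1 (c y) b' := by
    intro c; rw [hsplitprod c]; ring
  rw [Finset.sum_congr rfl (fun c _ => step c)]
  rw [split_sum_mul p
    (fun c => (∏ y ∈ Finset.univ.filter p, copyProb B y.1 (c y) b') * muF B C c)
    (fun c => ∏ y ∈ Finset.univ.filter (fun y => ¬ p y), copyProb B y.1 (c y) b')
    (fun c c' hcc => by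
      have h1 : (∏ y ∈ Finset.univ.filter p, copyProb B y.1 (c y) b') =
          ∏ y ∈ Finset.univ.filter p, copyProb B y.1 (c' y) b' := by
        refine Finset.prod_congr rfl fun y hy => ?_
        rw [hcc y (Finset.mem_filter.mp hy).2]
      have h2 : muF B C c = muF B C c' :=
        mu_congr B C (fun y hy => hcc y hy)
      rw [h1, h2])
    (fun c c' hcc => Finset.prod_congr rfl fun y hy => by
      rw [hcc y (Finset.mem_filter.mp hy).2])]
  have claim1 : (∑ c : Asg C,
      ((∏ y ∈ Finset.univ.filter p, copyProb B y.1 (c y) b') * muF B C c) *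
        ∏ y ∈ Finset.univ.filter (fun y => ¬ p y), (if c y then (0:ℝ) else 1)) =
      lamF B C := by
    unfold lamF
    refine Finset.sum_congr rfl fun c _ => ?_
    have hApin : Apin B C c =
        (∏ y ∈ Finset.univ.filter p, copyProb B y.1 (c y) b') *
          ∏ y ∈ Finset.univ.filter (fun y => ¬ p y), (if c y then (0:ℝ) else 1) := by
      unfold Apin
      rw [attach_eq_univ, ← Finset.prod_filter_mul_prod_filter_not Finset.univ p]
      congr 1
      · refine Finset.prod_congr rfl fun y hy => ?_
        have hyp : p y := (Finset.mem_filter.mp hy).2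
        rw [if_pos hyp]
        exact copyProb_init B hyp _ _ b'
      · exact Finset.prod_congr rfl (fun y hy => by
          rw [if_neg (Finset.mem_filter.mp hy).2])
    rw [hApin]
    ring
  have claim2 : (∑ c : Asg C,
      (∏ y ∈ Finset.univ.filter (fun y => ¬ p y), copyProb B y.1 (c y) b') *
        ∏ y ∈ Finset.univ.filter p, (if c y then (0:ℝ) else 1)) = 1 := by
    have step2 : ∀ c : Asg C,
        (∏ y ∈ Finset.univ.filter (fun y => ¬ p y), copyProb B y.1 (c y) b') *
          (∏ y ∈ Finset.univ.filter p, (if c y then (0:ℝ) else 1)) =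
        ∏ y : {x // x ∈ C}, (if p y then (if c y then (0:ℝ) else 1)
          else copyProb B y.1 (c y) b') := by
      intro c
      rw [← Finset.prod_filter_mul_prod_filter_not Finset.univ p
        (fun y => if p y then (if c y then (0:ℝ) else 1) else copyProb B y.1 (c y) b')]
      rw [Finset.prod_congr rfl (fun y hy => if_pos (Finset.mem_filter.mp hy).2),
        Finset.prod_congr (rfl : Finset.univ.filter (fun y => ¬ p y) = _)
          (fun y hy => if_neg (Finset.mem_filter.mp hy).2)]
      ring
    rw [Finset.sum_congr rfl (fun c _ => step2 c)]
    have key := sum_fun_bool (fun (y : {x // x ∈ C}) (v : Bool) =>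
      if p y then (if v then (0:ℝ) else 1) else copyProb B y.1 v b')
    rw [key]
    refine Finset.prod_eq_one fun y _ => ?_
    by_cases hyp : p y
    · simp [hyp]
    · simp [hyp, copyProb_sum_one]
  rw [claim1, claim2, mul_one]

/-- Quasi-stationarity: applying the chain to `muF` rescales it by `lamF`. -/
lemma mu_quasi_stat (B : GBN V) (C : Finset V) (hC : IsCutset B.edges C)
    (b : Asg C) :
    (∑ c : Asg C, cutsetP B C b c * muF B C c) = lamF B C * muF B C b := by
  classical
  have hbase : ∀ b' : V → Bool,
      (∑ c : Asg C, distDissect B C (DiracD b) b' c * muF B C c) =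
        (∑ c : Asg C, distDissect B C (DiracD b) b' c) * lamF B C := by
    intro b'
    unfold distDissect
    set W := B.ι (fun x => b' x.1) * DiracD b (fun x => b' x.1) *
      ∏ X ∈ (Finset.univ \ InitSet B.edges) \ C, copyProb B X (b' X) b' with hWdef
    have hL : (∑ c : Asg C, W * (∏ Y ∈ C.attach, copyProb B Y.1 (c Y) b') * muF B C c)
        = W * lamF B C := by
      rw [Finset.sum_congr rfl (fun c _ => mul_assoc W _ _), ← Finset.mul_sum,
        inner_split B C b']
    have hR : (∑ c : Asg C, W * ∏ Y ∈ C.attach, copyProb B Y.1 (c Y) b') = W := by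
      rw [← Finset.mul_sum, copies_sum_one B C b', mul_one]
    rw [hL, hR]
  have swap1 : (∑ c : Asg C, cutsetP B C b c * muF B C c) =
      ∑ b' : V → Bool, ∑ c : Asg C, distDissect B C (DiracD b) b' c * muF B C c := by
    rw [Finset.sum_congr rfl (fun c _ => by
      rw [cutsetP_eq B C b c, Finset.sum_mul]), Finset.sum_comm]
  have swap2 : (∑ c : Asg C, cutsetP B C b c) =
      ∑ b' : V → Bool, ∑ c : Asg C, distDissect B C (DiracD b) b' c := by
    rw [Finset.sum_congr rfl (fun c _ => cutsetP_eq B C b c), Finset.sum_comm]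
  rw [swap1, Finset.sum_congr rfl (fun b' _ => hbase b'), ← Finset.sum_mul, ← swap2,
    rowsum_eq_mu B C hC b, mul_comm]

/-- If `lamF = 1` then `muF` takes only the values `0` and `1`. -/
lemma mu_binary (B : GBN V) (C : Finset V) (hlam : lamF B C = 1) (b : Asg C) :
    muF B C b = 0 ∨ muF B C b = 1 := by
  classical
  -- all terms of `lamF` with `Apin c > 0` have `muF c = 1`
  have hterm : ∀ c : Asg C, Apin B C c ≠ 0 → muF B C c = 1 := by
    intro c hc
    by_contra hmu
    have hmu1 : muF B C c < 1 := lt_of_le_of_ne (mu_le_one B C c) hmu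
    have hApos : 0 < Apin B C c := lt_of_le_of_ne (Apin_nonneg B C c) (Ne.symm hc)
    have hlt : lamF B C < 1 := by
      rw [← Apin_sum_one B C]
      refine Finset.sum_lt_sum (fun i _ => ?_) ⟨c, Finset.mem_univ c, ?_⟩
      · calc Apin B C i * muF B C i ≤ Apin B C i * 1 :=
              mul_le_mul_of_nonneg_left (mu_le_one B C i) (Apin_nonneg B C i)
          _ = Apin B C i := mul_one _
      · calc Apin B C c * muF B C c < Apin B C c * 1 :=
              (mul_lt_mul_iff_right₀ hApos).mpr hmu1
          _ = Apin B C c := mul_one _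
    exact absurd hlam (ne_of_lt hlt)
  obtain ⟨c0, hc0⟩ : ∃ c : Asg C, Apin B C c ≠ 0 := by
    by_contra h
    push_neg at h
    have : (∑ c : Asg C, Apin B C c) = 0 := Finset.sum_eq_zero fun c _ => h c
    rw [Apin_sum_one B C] at this
    norm_num at this
  have hc0pin : ∀ y : {x // x ∈ C}, y.1 ∉ InitSet B.edges → c0 y = false := by
    intro y hy
    by_contra hcy
    refine hc0 ?_
    unfold Apin
    refine Finset.prod_eq_zero (Finset.mem_attach C y) ?_
    rw [if_neg hy, if_pos (by
      cases h : c0 y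
      · exact absurd h hcy
      · rfl)]
  have hc0mu : muF B C c0 = 1 := hterm c0 hc0
  -- pinned version of b
  set bt : Asg C := fun y => if y.1 ∈ InitSet B.edges then b y else false with hbt
  have hbmu : muF B C b = muF B C bt :=
    mu_congr B C (fun y hy => by rw [hbt]; simp [hy])
  have hbtpin : ∀ y : {x // x ∈ C}, y.1 ∉ InitSet B.edges → bt y = false := by
    intro y hy; rw [hbt]; simp [hy]
  by_cases hbc : bt = c0
  · right; rw [hbmu, hbc, hc0mu]
  · left
    rw [hbmu]
    -- the pinned sum equals 1 and the term at `c0` is already 1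
    have hsum := mu_pin_sum B C
    have hindone : ∀ c : Asg C,
        (∀ y : {x // x ∈ C}, y.1 ∉ InitSet B.edges → c y = false) →
        (∏ y ∈ Finset.univ.filter
          (fun y : {x // x ∈ C} => y.1 ∉ InitSet B.edges),
            (if c y then (0:ℝ) else 1)) = 1 := by
      intro c hcpin
      refine Finset.prod_eq_one fun y hy => ?_
      rw [hcpin y (Finset.mem_filter.mp hy).2]
      norm_num
    have hsplit := Finset.add_sum_erase Finset.univ
      (fun c : Asg C => muF B C c * ∏ y ∈ Finset.univ.filter
        (fun y : {x // x ∈ C} => y.1 ∉ InitSet B.edges),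
          (if c y then (0:ℝ) else 1)) (Finset.mem_univ c0)
    rw [← hsplit] at hsum
    rw [hindone c0 hc0pin, hc0mu, one_mul] at hsum
    have hrest : (∑ c ∈ Finset.univ.erase c0,
        muF B C c * ∏ y ∈ Finset.univ.filter
          (fun y : {x // x ∈ C} => y.1 ∉ InitSet B.edges),
            (if c y then (0:ℝ) else 1)) = 0 := by linarith
    have hterm0 := (Finset.sum_eq_zero_iff_of_nonneg (fun c _ => by
      refine mul_nonneg (mu_nonneg B C c) (Finset.prod_nonneg fun y _ => ?_)
      split <;> norm_num)).mp hrest bt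
      (Finset.mem_erase.mpr ⟨hbc, Finset.mem_univ bt⟩)
    rw [hindone bt hbtpin, mul_one] at hterm0
    exact hterm0

end BN6

section MC6

variable {α : Type} [Fintype α] [DecidableEq α]

lemma cesaro_apply {f : ℕ → α → ℝ} {n : ℕ} {a : α} :
    cesaro f n a = (∑ i ∈ Finset.range (n + 1), f i a) / (n + 1) := rfl

/-- The Cesàro averages of a convergent sequence converge to the same limit. -/
lemma cesaro_tendsto {f : ℕ → α → ℝ} {γ : α → ℝ}
    (h : Tendsto f atTop (nhds γ)) : Tendsto (cesaro f) atTop (nhds γ) := by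
  rw [tendsto_pi_nhds] at h ⊢
  intro a
  have hc := (h a).cesaro
  have hc' := hc.comp (tendsto_add_atTop_nat 1)
  refine hc'.congr fun n => ?_
  simp only [Function.comp]
  rw [cesaro_apply, div_eq_inv_mul]
  push_cast
  ring_nf

lemma matIter_succ (P : α → α → ℝ) (γ0 : α → ℝ) (n : ℕ) :
    matIter P γ0 (n + 1) = vecMul (matIter P γ0 n) P := rfl

lemma matIter_nonneg {P : α → α → ℝ} (hP : ∀ a b, 0 ≤ P a b) {γ0 : α → ℝ}
    (h0 : ∀ a, 0 ≤ γ0 a) (n : ℕ) (a : α) : 0 ≤ matIter P γ0 n a := by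
  induction n generalizing a with
  | zero => exact h0 a
  | succ n ih =>
    exact Finset.sum_nonneg fun b _ => mul_nonneg (ih b) (hP b a)

/-- The Cesàro limit of the transient distributions is stationary. -/
lemma stat_of_cesaro (P : α → α → ℝ) (γ0 γ : α → ℝ)
    (hcv : Tendsto (cesaro (matIter P γ0)) atTop (nhds γ)) :
    vecMul γ P = γ := by
  set x := matIter P γ0 with hx
  have hpt := tendsto_pi_nhds.mp hcv
  funext c
  -- identity: vecMul (cesaro x n) P c = (cesaro x (n+1) c * (n+2) - x 0 c) / (n+1)
  have hid : ∀ n : ℕ, vecMul (cesaro x n) P c =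
      (cesaro x (n + 1) c * (n + 2) - x 0 c) / (n + 1) := by
    intro n
    unfold vecMul
    have h1 : (∑ b, cesaro x n b * P b c) =
        (∑ i ∈ Finset.range (n + 1), x (i + 1) c) / (n + 1) := by
      rw [Finset.sum_congr rfl (fun b _ => by
        rw [cesaro_apply, div_mul_eq_mul_div, Finset.sum_mul])]
      rw [← Finset.sum_div, Finset.sum_comm]
      congr 1
    rw [h1, cesaro_apply, Finset.sum_range_succ' (fun i => x i c) (n + 1)]
    have hne : ((n : ℝ) + 1) ≠ 0 := by positivity
    have hne2 : ((n : ℕ) : ℝ) + 1 + 1 ≠ 0 := by positivity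
    push_cast
    field_simp
    ring
  -- limits
  have hL1 : Tendsto (fun n => vecMul (cesaro x n) P c) atTop
      (nhds (vecMul γ P c)) := by
    unfold vecMul
    refine tendsto_finset_sum _ fun b _ => ?_
    exact (hpt b).mul_const (P b c)
  have hL2 : Tendsto (fun n : ℕ =>
      (cesaro x (n + 1) c * (n + 2) - x 0 c) / (n + 1)) atTop (nhds (γ c)) := by
    have hA : Tendsto (fun n : ℕ => cesaro x (n + 1) c) atTop (nhds (γ c)) :=
      (hpt c).comp (tendsto_add_atTop_nat 1)
    have hinv : Tendsto (fun n : ℕ => 1 / ((n : ℝ) + 1)) atTop (nhds 0) :=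
      tendsto_one_div_add_atTop_nhds_zero_nat
    have hfrac : Tendsto (fun n : ℕ => ((n : ℝ) + 2) / ((n : ℝ) + 1)) atTop (nhds 1) := by
      have h := (tendsto_const_nhds :
        Tendsto (fun _ : ℕ => (1:ℝ)) atTop (nhds 1)).add hinv
      rw [add_zero] at h
      refine (h : Tendsto (fun n : ℕ => 1 + 1 / ((n : ℝ) + 1)) atTop (nhds 1)).congr
        fun n => ?_
      have hne : ((n : ℝ) + 1) ≠ 0 := by positivity
      field_simp
      try ring
    have hcomb : Tendsto (fun n : ℕ =>
        cesaro x (n + 1) c * (((n : ℝ) + 2) / ((n : ℝ) + 1)) -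
          x 0 c * (1 / ((n : ℝ) + 1))) atTop (nhds (γ c * 1 - x 0 c * 0)) :=
      (hA.mul hfrac).sub (tendsto_const_nhds.mul hinv)
    rw [show γ c * 1 - x 0 c * 0 = γ c by ring] at hcomb
    refine hcomb.congr fun n => ?_
    have hne : ((n : ℝ) + 1) ≠ 0 := by positivity
    field_simp
    try ring
  have := tendsto_nhds_unique (hL1.congr fun n => hid n) hL2
  exact this

/-- Main abstract lemma: any Cesàro limit of the transient distributions is a
genuine limit of the transient distributions from some initial distribution. -/
theorem mc_main (P : α → α → ℝ) (hP : ∀ a b, 0 ≤ P a b)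
    (M : α → ℝ) (hMrow : ∀ a, (∑ b, P a b) = M a)
    (hM0 : ∀ a, 0 ≤ M a) (hM1 : ∀ a, M a ≤ 1)
    (lam : ℝ) (hlam0 : 0 ≤ lam) (hlam1 : lam ≤ 1)
    (hqs : ∀ a, (∑ c, P a c * M c) = lam * M a)
    (hbin : lam = 1 → ∀ a, M a = 0 ∨ M a = 1)
    (γ0 γ : α → ℝ) (h0 : IsDist γ0)
    (hcv : Tendsto (cesaro (matIter P γ0)) atTop (nhds γ)) :
    ∃ γ0' : α → ℝ, IsDist γ0' ∧ Tendsto (matIter P γ0') atTop (nhds γ) := by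
  classical
  set x := matIter P γ0 with hx
  have hxnn : ∀ n a, 0 ≤ x n a := fun n a => matIter_nonneg hP h0.1 n a
  -- weighted masses
  set w : ℕ → ℝ := fun n => ∑ a, x n a * M a with hw
  have hwsucc : ∀ n, w (n + 1) = lam * w n := by
    intro n
    have h1 : w (n + 1) = ∑ c, (∑ b, x n b * P b c) * M c := rfl
    rw [h1]
    rw [Finset.sum_congr rfl (fun c _ => by rw [Finset.sum_mul]), Finset.sum_comm]
    rw [Finset.sum_congr rfl (fun b _ => by
      rw [show (∑ c, x n b * P b c * M c) = x n b * ∑ c, P b c * M c by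
          rw [Finset.mul_sum]; exact Finset.sum_congr rfl fun c _ => by ring,
        hqs b])]
    rw [Finset.mul_sum]
    exact Finset.sum_congr rfl fun b _ => by ring
  have hwpow : ∀ n, w n = lam ^ n * w 0 := by
    intro n
    induction n with
    | zero => simp
    | succ n ih => rw [hwsucc n, ih]; ring
  have hmass : ∀ n, (∑ a, x (n + 1) a) = w n := by
    intro n
    have h1 : (∑ a, x (n + 1) a) = ∑ a, ∑ b, x n b * P b a := rfl
    rw [h1, Finset.sum_comm]
    refine Finset.sum_congr rfl fun b _ => ?_
    rw [← Finset.mul_sum, hMrow b]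
  have hw0nn : 0 ≤ w 0 :=
    Finset.sum_nonneg fun a _ => mul_nonneg (hxnn 0 a) (hM0 a)
  have hw0le : w 0 ≤ 1 := by
    rw [← h0.2]
    refine Finset.sum_le_sum fun a _ => ?_
    calc x 0 a * M a ≤ x 0 a * 1 :=
          mul_le_mul_of_nonneg_left (hM1 a) (hxnn 0 a)
      _ = x 0 a := mul_one _
  by_cases hl : lam = 1
  · -- the chain is stochastic on reachable states
    have hMbin := hbin hl
    have hwconst : ∀ n, w n = w 0 := fun n => by rw [hwpow n, hl]; simp
    have hstat : vecMul γ P = γ := stat_of_cesaro P γ0 γ hcv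
    have hpt := tendsto_pi_nhds.mp hcv
    have hγnn : ∀ a, 0 ≤ γ a := by
      intro a
      refine ge_of_tendsto' (hpt a) fun n => ?_
      rw [cesaro_apply]
      exact div_nonneg (Finset.sum_nonneg fun i _ => hxnn i a) (by positivity)
    -- total mass of γ equals w 0
    have hsums : ∀ n, (∑ a, cesaro x n a) = (1 + n * w 0) / (n + 1) := by
      intro n
      rw [show (∑ a, cesaro x n a) =
          (∑ i ∈ Finset.range (n + 1), ∑ a, x i a) / (n + 1) by
        rw [Finset.sum_congr rfl fun a (_ : a ∈ Finset.univ) => cesaro_apply,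
          ← Finset.sum_div, Finset.sum_comm]]
      congr 1
      rw [Finset.sum_range_succ' (fun i => ∑ a, x i a) n]
      rw [Finset.sum_congr rfl (fun i (_ : i ∈ Finset.range n) =>
        (hmass i).trans (hwconst i)), show (∑ a, x 0 a) = 1 from h0.2]
      simp only [Finset.sum_const, Finset.card_range, nsmul_eq_mul]
      ring
    have hγsum : (∑ a, γ a) = w 0 := by
      have hT1 : Tendsto (fun n => ∑ a, cesaro x n a) atTop (nhds (∑ a, γ a)) :=
        tendsto_finset_sum _ fun a _ => hpt a
      have hT2 : Tendsto (fun n : ℕ => (1 + n * w 0) / (n + 1)) atTop (nhds (w 0)) := by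
        have hinv : Tendsto (fun n : ℕ => 1 / ((n : ℝ) + 1)) atTop (nhds 0) :=
          tendsto_one_div_add_atTop_nhds_zero_nat
        have : Tendsto (fun n : ℕ => w 0 + (1 - w 0) * (1 / ((n : ℝ) + 1))) atTop
            (nhds (w 0 + (1 - w 0) * 0)) := tendsto_const_nhds.add (tendsto_const_nhds.mul hinv)
        rw [show w 0 + (1 - w 0) * 0 = w 0 by ring] at this
        refine this.congr fun n => ?_
        have hne : ((n : ℝ) + 1) ≠ 0 := by positivity
        field_simp
        ring
      exact tendsto_nhds_unique (hT1.congr fun n => hsums n) hT2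
    -- the dead part of γ0
    set ζ : α → ℝ := fun a => if M a = 0 then γ0 a else 0 with hζ
    have hζnn : ∀ a, 0 ≤ ζ a := fun a => by
      show 0 ≤ (if M a = 0 then γ0 a else 0)
      split
      · exact h0.1 a
      · exact le_refl 0
    have hζsum : (∑ a, ζ a) = 1 - w 0 := by
      have : ∀ a, γ0 a = γ0 a * M a + ζ a := by
        intro a
        show γ0 a = γ0 a * M a + (if M a = 0 then γ0 a else 0)
        rcases hMbin a with hM | hM
        · rw [if_pos hM, hM]; ring
        · rw [if_neg (by rw [hM]; norm_num), hM]; ring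
      have hsum := h0.2
      rw [Finset.sum_congr rfl (fun a _ => this a), Finset.sum_add_distrib] at hsum
      have : w 0 + (∑ a, ζ a) = 1 := hsum
      linarith
    have hζP : ∀ c, (∑ a, ζ a * P a c) = 0 := by
      intro c
      refine Finset.sum_eq_zero fun a _ => ?_
      rcases hMbin a with hM | hM
      · have hrow : (∑ b, P a b) = 0 := by rw [hMrow a, hM]
        have hPac : P a c = 0 := by
          have := (Finset.sum_eq_zero_iff_of_nonneg (fun b _ => hP a b)).mp hrow c
            (Finset.mem_univ c)
          exact this
        rw [hPac]; ring
      · show (if M a = 0 then γ0 a else 0) * P a c = 0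
        rw [if_neg (by rw [hM]; norm_num)]; ring
    set γ0' : α → ℝ := fun a => γ a + ζ a with hγ0'
    have hdist : IsDist γ0' := by
      constructor
      · intro a; exact add_nonneg (hγnn a) (hζnn a)
      · show (∑ a, (γ a + ζ a)) = 1
        rw [Finset.sum_add_distrib, hγsum, hζsum]; ring
    have hone : matIter P γ0' 1 = γ := by
      funext c
      show (∑ a, γ0' a * P a c) = γ c
      have hsplit : ∀ a, γ0' a * P a c = γ a * P a c + ζ a * P a c := by
        intro a
        show (γ a + ζ a) * P a c = _
        ring
      rw [Finset.sum_congr rfl (fun a (_ : a ∈ Finset.univ) => hsplit a),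
        Finset.sum_add_distrib, hζP c, add_zero]
      exact congrFun hstat c
    have hconst : ∀ n, matIter P γ0' (n + 1) = γ := by
      intro n
      induction n with
      | zero => exact hone
      | succ n ih =>
        rw [matIter_succ, ih]
        exact hstat
    refine ⟨γ0', hdist, ?_⟩
    have hev : ∀ᶠ n in atTop, γ = matIter P γ0' n := by
      refine Filter.eventually_atTop.mpr ⟨1, fun n hn => ?_⟩
      obtain ⟨m, rfl⟩ := Nat.exists_eq_add_of_le hn
      rw [Nat.add_comm]
      exact (hconst m).symm
    exact Tendsto.congr' hev tendsto_const_nhds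
  · -- `lam < 1`: everything converges to zero
    have hllt : lam < 1 := lt_of_le_of_ne hlam1 hl
    have hbound : ∀ n a, x (n + 1) a ≤ lam ^ n := by
      intro n a
      have h1 : x (n + 1) a ≤ ∑ b, x (n + 1) b :=
        Finset.single_le_sum (fun b _ => hxnn (n + 1) b) (Finset.mem_univ a)
      have h2 : (∑ b, x (n + 1) b) = lam ^ n * w 0 := by rw [hmass n, hwpow n]
      calc x (n + 1) a ≤ lam ^ n * w 0 := by rw [← h2]; exact h1
        _ ≤ lam ^ n * 1 := mul_le_mul_of_nonneg_left hw0le (pow_nonneg hlam0 n)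
        _ = lam ^ n := mul_one _
    have hx0 : Tendsto x atTop (nhds (fun _ => (0 : ℝ))) := by
      rw [tendsto_pi_nhds]
      intro a
      rw [← Filter.tendsto_add_atTop_iff_nat 1]
      refine squeeze_zero (fun n => hxnn (n + 1) a) (fun n => hbound n a) ?_
      exact tendsto_pow_atTop_nhds_zero_of_lt_one hlam0 hllt
    have hγ0 : γ = fun _ => (0 : ℝ) :=
      tendsto_nhds_unique hcv (cesaro_tendsto hx0)
    refine ⟨γ0, h0, ?_⟩
    rw [hγ0]
    exact hx0

end MC6

/-- For any cutset `C`, the Markov chain semantics, the limit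
average semantics and the limit semantics induce the same set of full joint
distributions: `[B]_{MC-C} = [B]_{LimAvg-C} = [B]_{Lim-C}`. -/
theorem stmt6 {V : Type} [Fintype V] [DecidableEq V]
    (B : GBN V) (C : Finset V) (hC : IsCutset B.edges C) :
    MCSem B C = LimAvgSem B C ∧ LimAvgSem B C = LimSem B C := by
  classical
  have hseq : ∀ γ0 : Asg C → ℝ, nextSeq B C γ0 = matIter (cutsetP B C) γ0 :=
    fun γ0 => funext (nextSeq_eq_matIter B C γ0)
  constructor
  · ext μ
    constructor
    · rintro ⟨γ0, γ, h1, h2, h3⟩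
      exact ⟨γ0, γ, h1, by rw [hseq γ0]; exact h2, h3⟩
    · rintro ⟨γ0, γ, h1, h2, h3⟩
      refine ⟨γ0, γ, h1, ?_, h3⟩
      rw [hseq γ0] at h2
      exact h2
  · ext μ
    constructor
    · rintro ⟨γ0, γ, h1, h2, h3⟩
      rw [hseq γ0] at h2
      obtain ⟨γ0', hdist, htend⟩ := mc_main (cutsetP B C) (cutsetP_nonneg B C)
        (muF B C) (rowsum_eq_mu B C hC) (mu_nonneg B C) (mu_le_one B C)
        (lamF B C) (lam_nonneg B C) (lam_le_one B C)
        (mu_quasi_stat B C hC) (mu_binary B C) γ0 γ h1 h2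
      exact ⟨γ0', γ, hdist, by rw [hseq γ0']; exact htend, h3⟩
    · rintro ⟨γ0, γ, h1, h2, h3⟩
      exact ⟨γ0, γ, h1, cesaro_tendsto h2, h3⟩

end GBNPaper
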